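/- Let σ_x = !![0, 1; 1, 0] be the Pauli X matrix over ℂ. For every real number x with −1 ≤ x ≤ 1, the single-qubit rotation W(x) := exp((i · arccos x) • σ_x) equals the 2 × 2 complex matrix !![x, i·√(1−x²); i·√(1−x²), x]. -/

import Mathlib

open NormedSpace Complex

/-- The QSP signal rotation: for `x ∈ [-1,1]`,
`W(x) = exp((i arccos x) • σ_x) = !![x, i√(1-x²); i√(1-x²), x]`. -/
theorem exp_arccos_smul_pauli_x (x : ℝ) (hx : -1 ≤ x) (hx' : x ≤ 1) :
    exp ((Complex.I * Real.arccos x) • (!![0, 1; 1, 0] : Matrix (Fin 2) (Fin 2) ℂ)) =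
      !![(x : ℂ), Complex.I * Real.sqrt (1 - x ^ 2);
         Complex.I * Real.sqrt (1 - x ^ 2), (x : ℂ)] := by
  set c : ℂ := Complex.I * Real.arccos x with hc
  set U : Matrix (Fin 2) (Fin 2) ℂ := !![1, 1; 1, -1] with hU
  have hdet : U.det = -2 := by simp [hU, Matrix.det_fin_two_of]; norm_num
  have hUnit : IsUnit U := by
    rw [Matrix.isUnit_iff_isUnit_det, hdet]; exact (isUnit_iff_ne_zero.mpr (by norm_num))
  have hUinv : U⁻¹ = !![(1:ℂ)/2, 1/2; 1/2, -(1/2)] := by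
    rw [Matrix.inv_def, hdet, hU]
    ext i j
    fin_cases i <;> fin_cases j <;>
      simp [Matrix.adjugate_fin_two, Ring.inverse_eq_inv] <;> ring
  have hdiag : Matrix.diagonal ![c, -c] = !![c, 0; 0, -c] := by
    ext i j
    fin_cases i <;> fin_cases j <;> simp [Matrix.diagonal]
  have key : (c • (!![0, 1; 1, 0] : Matrix (Fin 2) (Fin 2) ℂ)) =
      U * Matrix.diagonal ![c, -c] * U⁻¹ := by
    rw [hUinv, hU, hdiag]
    ext i j
    fin_cases i <;> fin_cases j <;>
      simp [Matrix.mul_apply, Fin.sum_univ_two] <;> ring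
  rw [key, Matrix.exp_conj U (Matrix.diagonal ![c, -c]) hUnit, Matrix.exp_diagonal]
  have hexp : NormedSpace.exp ![c, -c] = ![Complex.exp c, Complex.exp (-c)] := by
    funext i; fin_cases i <;> simp [Pi.exp_def, Complex.exp_eq_exp_ℂ]
  rw [hexp]
  have hce : Complex.exp c = x + Complex.I * Real.sqrt (1 - x ^ 2) := by
    rw [hc, mul_comm, Complex.exp_mul_I]
    rw [show ((Real.arccos x : ℂ)) = ((Real.arccos x : ℝ) : ℂ) from rfl]
    rw [← Complex.ofReal_cos, ← Complex.ofReal_sin,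
      Real.cos_arccos hx hx', Real.sin_arccos]
    ring
  have hce' : Complex.exp (-c) = x - Complex.I * Real.sqrt (1 - x ^ 2) := by
    rw [hc, show -(Complex.I * (Real.arccos x : ℂ)) = ((-Real.arccos x : ℝ) : ℂ) * Complex.I by
      push_cast; ring, Complex.exp_mul_I]
    rw [← Complex.ofReal_cos, ← Complex.ofReal_sin, Real.cos_neg, Real.sin_neg,
      Real.cos_arccos hx hx', Real.sin_arccos]
    push_cast; ring
  have hdiag2 : Matrix.diagonal ![Complex.exp c, Complex.exp (-c)] =
      !![Complex.exp c, 0; 0, Complex.exp (-c)] := by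
    ext i j
    fin_cases i <;> fin_cases j <;> simp [Matrix.diagonal]
  rw [hdiag2, hUinv, hU]
  ext i j
  fin_cases i <;> fin_cases j <;>
    simp [Matrix.mul_apply, Fin.sum_univ_two, hce, hce'] <;> ring
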